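/- Let f_p, f_q : ℝ^D → ℝ be nonnegative and integrable with finite second moments, number densities n_p, n_q > 0, mean velocities v̄_p, v̄_q and temperatures T_p, T_q (computed with particle masses m_p, m_q > 0), and set ρ_p = m_p n_p, ρ_q = m_q n_q. Let ν_{p,q}, ν_{q,p} > 0, let u = (ρ_p ν_{p,q} v̄_p + ρ_q ν_{q,p} v̄_q)/(ρ_p ν_{p,q} + ρ_q ν_{q,p}), and for Θ > 0 let M_{p,q} be the Maxwellian with mass m_p, density n_p, mean u and temperature Θ, and M_{q,p} the Maxwellian with mass m_q, density n_q, mean u and temperature Θ. Then the kinetic-energy exchange balance m_p ∫ |v|² ν_{p,q}(M_{p,q}(v) − f_p(v)) dv + m_q ∫ |v|² ν_{q,p}(M_{q,p}(v) − f_q(v)) dv = 0 holds if and only if Θ = (n_p ν_{p,q} T_p + n_q ν_{q,p} T_q)/(n_p ν_{p,q} + n_q ν_{q,p}) + (ρ_p ν_{p,q}(|v̄_p|² − |u|²) + ρ_q ν_{q,p}(|v̄_q|² − |u|²)) / (D (n_p ν_{p,q} + n_q ν_{q,p})). -/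

import Mathlib

open MeasureTheory

/-- The Maxwellian distribution with number density `n`, mean velocity `vb`,
temperature `T` and particle mass `m` on `ℝ^D`. -/
noncomputable def maxwellian (D : ℕ) (m n T : ℝ) (vb : EuclideanSpace ℝ (Fin D))
    (v : EuclideanSpace ℝ (Fin D)) : ℝ :=
  n * (m / (2 * Real.pi * T)) ^ ((D : ℝ) / 2) * Real.exp (-(m * ‖v - vb‖ ^ 2) / (2 * T))

section BGKAux
set_option maxHeartbeats 1000000
open Real

variable {D : ℕ}

lemma integrable_sq_mul_gauss_1d {b : ℝ} (hb : 0 < b) :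
    Integrable (fun x : ℝ => x ^ 2 * Real.exp (-b * x ^ 2)) := by
  have := integrable_rpow_mul_exp_neg_mul_sq hb (s := 2) (by norm_num)
  have h : ∀ x : ℝ, x ^ (2 : ℝ) = x ^ (2 : ℕ) := fun x => Real.rpow_natCast x 2
  simpa [h] using this

lemma gauss_moment_1d {b : ℝ} (hb : 0 < b) :
    ∫ x : ℝ, x ^ 2 * Real.exp (-b * x ^ 2) = (2 * b)⁻¹ * Real.sqrt (π / b) := by
  have hint := integrable_sq_mul_gauss_1d hb
  have hIoi : ∫ x in Set.Ioi (0:ℝ), x ^ 2 * Real.exp (-b * x ^ 2)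
      = b ^ (-(3:ℝ)/2) * (1/2) * Real.Gamma (3/2) := by
    have := integral_rpow_mul_exp_neg_mul_rpow (p := 2) (q := 2) two_pos (by norm_num) hb
    have h : ∀ x : ℝ, x ^ (2 : ℝ) = x ^ (2 : ℕ) := fun x => Real.rpow_natCast x 2
    simp only [h] at this
    rw [this]
    norm_num
  have hIic : ∫ x in Set.Iic (0:ℝ), x ^ 2 * Real.exp (-b * x ^ 2)
      = ∫ x in Set.Ioi (0:ℝ), x ^ 2 * Real.exp (-b * x ^ 2) := by
    have := integral_comp_neg_Iic (0:ℝ) (fun x => x ^ 2 * Real.exp (-b * x ^ 2))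
    simp only [neg_sq, neg_zero] at this
    exact this
  have hsplit := intervalIntegral.integral_Iic_add_Ioi (μ := volume) (b := (0:ℝ))
    hint.integrableOn hint.integrableOn
  have hG : Real.Gamma (3/2) = Real.sqrt π / 2 := by
    have : (3/2 : ℝ) = 1/2 + 1 := by norm_num
    rw [this, Real.Gamma_add_one (by norm_num), Real.Gamma_one_half_eq]
    ring
  have hkey : ∫ x : ℝ, x ^ 2 * Real.exp (-b * x ^ 2)
      = 2 * (b ^ (-(3:ℝ)/2) * (1/2) * Real.Gamma (3/2)) := by
    rw [← hsplit, hIic, hIoi]; ring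
  rw [hkey, hG]
  rw [Real.sqrt_eq_rpow, Real.sqrt_eq_rpow, Real.div_rpow pi_pos.le hb.le]
  rw [show (-(3:ℝ)/2) = -1 + -(1/2) by norm_num, Real.rpow_add hb, Real.rpow_neg_one,
    Real.rpow_neg hb.le]
  ring

lemma norm_equiv_symm_sq (x : Fin D → ℝ) :
    ‖(MeasurableEquiv.toLp 2 (Fin D → ℝ)) x‖ ^ 2 = ∑ j, (x j) ^ 2 := by
  simp only [MeasurableEquiv.toLp_apply,
    EuclideanSpace.norm_eq, PiLp.toLp_apply, Real.norm_eq_abs, sq_abs]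
  rw [sq_sqrt]
  exact Finset.sum_nonneg fun i _ => by positivity

lemma integrable_sq_norm_mul_gauss {b : ℝ} (hb : 0 < b) :
    Integrable (fun v : EuclideanSpace ℝ (Fin D) => ‖v‖ ^ 2 * Real.exp (-b * ‖v‖ ^ 2)) := by
  have hvp := (EuclideanSpace.volume_preserving_symm_measurableEquiv_toLp (Fin D)).symm
  rw [← hvp.integrable_comp_emb (MeasurableEquiv.measurableEmbedding _)]
  have heq : (fun x : Fin D → ℝ => ‖(MeasurableEquiv.toLp 2 (Fin D → ℝ)) x‖ ^ 2
        * Real.exp (-b * ‖(MeasurableEquiv.toLp 2 (Fin D → ℝ)) x‖ ^ 2))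
      = fun x : Fin D → ℝ => ∑ i, ∏ j, (if j = i then (x j) ^ 2 else 1) * Real.exp (-b * (x j) ^ 2) := by
    funext x
    simp only [norm_equiv_symm_sq]
    rw [Finset.sum_mul]
    congr 1; funext i
    rw [Finset.prod_mul_distrib, Finset.prod_ite_eq', if_pos (Finset.mem_univ i),
      ← Real.exp_sum]
    simp [Finset.mul_sum]
  simp only [Function.comp_def, MeasurableEquiv.symm_symm]
  rw [heq]
  refine integrable_finset_sum _ fun i _ => Integrable.fintype_prod (f := fun j (y : ℝ) =>
    (if j = i then y ^ 2 else 1) * Real.exp (-b * y ^ 2)) fun j => ?_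
  by_cases h : j = i
  · simpa [h] using integrable_sq_mul_gauss_1d hb
  · simpa [h] using integrable_exp_neg_mul_sq hb

lemma integral_sq_norm_mul_gauss (hD : 1 ≤ D) {b : ℝ} (hb : 0 < b) :
    ∫ v : EuclideanSpace ℝ (Fin D), ‖v‖ ^ 2 * Real.exp (-b * ‖v‖ ^ 2)
      = (D : ℝ) * (2 * b)⁻¹ * (π / b) ^ ((D : ℝ) / 2) := by
  have hvp := (EuclideanSpace.volume_preserving_symm_measurableEquiv_toLp (Fin D)).symm
  rw [← hvp.integral_comp (MeasurableEquiv.measurableEmbedding _)]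
  have heq : (fun x : Fin D → ℝ => ‖(MeasurableEquiv.toLp 2 (Fin D → ℝ)) x‖ ^ 2
        * Real.exp (-b * ‖(MeasurableEquiv.toLp 2 (Fin D → ℝ)) x‖ ^ 2))
      = fun x : Fin D → ℝ => ∑ i, ∏ j, (if j = i then (x j) ^ 2 else 1) * Real.exp (-b * (x j) ^ 2) := by
    funext x
    simp only [norm_equiv_symm_sq]
    rw [Finset.sum_mul]
    congr 1; funext i
    rw [Finset.prod_mul_distrib, Finset.prod_ite_eq', if_pos (Finset.mem_univ i),
      ← Real.exp_sum]
    simp [Finset.mul_sum]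
  simp only [MeasurableEquiv.symm_symm]
  rw [heq, integral_finset_sum]
  · have hone : ∀ i : Fin D,
        (∫ x : Fin D → ℝ, ∏ j, (if j = i then (x j) ^ 2 else 1) * Real.exp (-b * (x j) ^ 2))
        = (2 * b)⁻¹ * Real.sqrt (π / b) ^ D := by
      intro i
      rw [integral_fintype_prod_volume_eq_prod (f := fun j (y : ℝ) =>
        (if j = i then y ^ 2 else 1) * Real.exp (-b * y ^ 2))]
      have hval : ∀ j, (∫ y : ℝ, (if j = i then y ^ 2 else 1) * Real.exp (-b * y ^ 2))
          = if j = i then (2 * b)⁻¹ * Real.sqrt (π / b) else Real.sqrt (π / b) := by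
        intro j
        by_cases h : j = i
        · subst h; simp only [if_pos rfl]; exact gauss_moment_1d hb
        · simp only [if_neg h, one_mul]; exact integral_gaussian b
      simp only [hval]
      rw [← Finset.mul_prod_erase Finset.univ _ (Finset.mem_univ i), if_pos rfl]
      rw [Finset.prod_congr rfl (fun j hj => if_neg (Finset.ne_of_mem_erase hj)),
        Finset.prod_const, Finset.card_erase_of_mem (Finset.mem_univ i), Finset.card_univ,
        Fintype.card_fin]
      rw [mul_assoc, ← pow_succ' (Real.sqrt (π / b)) (D - 1), Nat.sub_add_cancel hD]
    simp only [hone, Finset.sum_const, Finset.card_univ, Fintype.card_fin, nsmul_eq_mul]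
    have : Real.sqrt (π / b) ^ D = (π / b) ^ ((D : ℝ) / 2) := by
      rw [Real.sqrt_eq_rpow, ← Real.rpow_natCast ((π / b) ^ (1 / (2:ℝ))) D,
        ← Real.rpow_mul (by positivity)]
      congr 1
      push_cast
      ring
    rw [this]; ring
  · intro i _
    refine Integrable.fintype_prod (f := fun j (y : ℝ) =>
      (if j = i then y ^ 2 else 1) * Real.exp (-b * y ^ 2)) fun j => ?_
    by_cases h : j = i
    · simpa [h] using integrable_sq_mul_gauss_1d hb
    · simpa [h] using integrable_exp_neg_mul_sq hb

lemma integrable_gauss {b : ℝ} (hb : 0 < b) :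
    Integrable (fun v : EuclideanSpace ℝ (Fin D) => Real.exp (-b * ‖v‖ ^ 2)) := by
  have hvp := (EuclideanSpace.volume_preserving_symm_measurableEquiv_toLp (Fin D)).symm
  rw [← hvp.integrable_comp_emb (MeasurableEquiv.measurableEmbedding _)]
  have heq : (fun x : Fin D → ℝ => Real.exp (-b * ‖(MeasurableEquiv.toLp 2 (Fin D → ℝ)) x‖ ^ 2))
      = fun x : Fin D → ℝ => ∏ j, Real.exp (-b * (x j) ^ 2) := by
    funext x
    simp only [norm_equiv_symm_sq, ← Real.exp_sum]
    simp [Finset.mul_sum]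
  simp only [Function.comp_def, MeasurableEquiv.symm_symm]
  rw [heq]
  exact Integrable.fintype_prod fun j => integrable_exp_neg_mul_sq hb

lemma integral_gauss {b : ℝ} (hb : 0 < b) :
    ∫ v : EuclideanSpace ℝ (Fin D), Real.exp (-b * ‖v‖ ^ 2) = (π / b) ^ ((D : ℝ) / 2) := by
  have := GaussianFourier.integral_rexp_neg_mul_sq_norm (V := EuclideanSpace ℝ (Fin D)) hb
  rwa [finrank_euclideanSpace_fin] at this

lemma cross_zero {b : ℝ} (u : EuclideanSpace ℝ (Fin D)) :
    ∫ v : EuclideanSpace ℝ (Fin D), (inner ℝ u v : ℝ) * Real.exp (-b * ‖v‖ ^ 2) = 0 := by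
  have h1 := integral_neg_eq_self
    (fun v : EuclideanSpace ℝ (Fin D) => (inner ℝ u v : ℝ) * Real.exp (-b * ‖v‖ ^ 2)) volume
  simp only [inner_neg_right, norm_neg, neg_mul] at h1
  rw [integral_neg] at h1
  simp only [neg_mul] at h1 ⊢
  linarith

lemma integrable_inner_gauss {b : ℝ} (hb : 0 < b) (u : EuclideanSpace ℝ (Fin D)) :
    Integrable (fun v : EuclideanSpace ℝ (Fin D) => (inner ℝ u v : ℝ) * Real.exp (-b * ‖v‖ ^ 2)) := by
  have hg : Integrable (fun v : EuclideanSpace ℝ (Fin D) =>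
      ‖u‖ * (Real.exp (-b * ‖v‖ ^ 2) + ‖v‖ ^ 2 * Real.exp (-b * ‖v‖ ^ 2))) :=
    ((integrable_gauss hb).add (integrable_sq_norm_mul_gauss hb)).const_mul _
  refine hg.mono' ?_ ?_
  · apply Continuous.aestronglyMeasurable
    exact (continuous_const.inner continuous_id).mul (by fun_prop)
  · refine Filter.Eventually.of_forall fun v => ?_
    have h1 : |(inner ℝ u v : ℝ)| ≤ ‖u‖ * ‖v‖ := abs_real_inner_le_norm u v
    have h2 : ‖v‖ ≤ 1 + ‖v‖ ^ 2 := by nlinarith [norm_nonneg v, sq_nonneg (‖v‖ - 1)]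
    have h3 : (0:ℝ) < Real.exp (-b * ‖v‖ ^ 2) := Real.exp_pos _
    rw [Real.norm_eq_abs, abs_mul, abs_of_pos h3]
    calc |(inner ℝ u v : ℝ)| * Real.exp (-b * ‖v‖ ^ 2)
        ≤ (‖u‖ * (1 + ‖v‖ ^ 2)) * Real.exp (-b * ‖v‖ ^ 2) := by
          apply mul_le_mul_of_nonneg_right _ h3.le
          exact h1.trans (by nlinarith [norm_nonneg u, norm_nonneg v])
      _ = ‖u‖ * (Real.exp (-b * ‖v‖ ^ 2) + ‖v‖ ^ 2 * Real.exp (-b * ‖v‖ ^ 2)) := by ring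

lemma shifted_sq_eq (b : ℝ) (u : EuclideanSpace ℝ (Fin D)) :
    (fun w : EuclideanSpace ℝ (Fin D) => ‖w + u‖ ^ 2 * Real.exp (-b * ‖w‖ ^ 2))
      = fun w => (‖w‖ ^ 2 * Real.exp (-b * ‖w‖ ^ 2)
          + 2 * ((inner ℝ u w : ℝ) * Real.exp (-b * ‖w‖ ^ 2)))
          + ‖u‖ ^ 2 * Real.exp (-b * ‖w‖ ^ 2) := by
  funext w
  rw [norm_add_sq_real, real_inner_comm w u]
  ring

lemma integrable_gauss_shift {b : ℝ} (hb : 0 < b) (u : EuclideanSpace ℝ (Fin D)) :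
    Integrable (fun v : EuclideanSpace ℝ (Fin D) => Real.exp (-b * ‖v - u‖ ^ 2)) :=
  (integrable_gauss hb).comp_sub_right u

lemma integrable_sq_norm_gauss_shift {b : ℝ} (hb : 0 < b) (u : EuclideanSpace ℝ (Fin D)) :
    Integrable (fun v : EuclideanSpace ℝ (Fin D) => ‖v‖ ^ 2 * Real.exp (-b * ‖v - u‖ ^ 2)) := by
  have key : Integrable (fun w : EuclideanSpace ℝ (Fin D) =>
      ‖w + u‖ ^ 2 * Real.exp (-b * ‖w‖ ^ 2)) := by
    rw [shifted_sq_eq]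
    exact ((integrable_sq_norm_mul_gauss hb).add
      ((integrable_inner_gauss hb u).const_mul 2)).add ((integrable_gauss hb).const_mul _)
  have := key.comp_sub_right u
  simpa using this

lemma integral_gauss_shift {b : ℝ} (hb : 0 < b) (u : EuclideanSpace ℝ (Fin D)) :
    ∫ v : EuclideanSpace ℝ (Fin D), Real.exp (-b * ‖v - u‖ ^ 2) = (π / b) ^ ((D : ℝ) / 2) := by
  rw [integral_sub_right_eq_self (fun w : EuclideanSpace ℝ (Fin D) => Real.exp (-b * ‖w‖ ^ 2)) u]
  exact integral_gauss hb

lemma integral_sq_norm_gauss_shift (hD : 1 ≤ D) {b : ℝ} (hb : 0 < b)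
    (u : EuclideanSpace ℝ (Fin D)) :
    ∫ v : EuclideanSpace ℝ (Fin D), ‖v‖ ^ 2 * Real.exp (-b * ‖v - u‖ ^ 2)
      = (‖u‖ ^ 2 + (D : ℝ) * (2 * b)⁻¹) * (π / b) ^ ((D : ℝ) / 2) := by
  have h1 : ∫ v : EuclideanSpace ℝ (Fin D), ‖v‖ ^ 2 * Real.exp (-b * ‖v - u‖ ^ 2)
      = ∫ w : EuclideanSpace ℝ (Fin D), ‖w + u‖ ^ 2 * Real.exp (-b * ‖w‖ ^ 2) := by
    rw [← integral_sub_right_eq_self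
      (fun w : EuclideanSpace ℝ (Fin D) => ‖w + u‖ ^ 2 * Real.exp (-b * ‖w‖ ^ 2)) u]
    simp
  rw [h1, shifted_sq_eq, integral_add, integral_add]
  · rw [integral_const_mul, integral_const_mul, cross_zero, integral_sq_norm_mul_gauss hD hb,
      integral_gauss hb]
    ring
  · exact integrable_sq_norm_mul_gauss hb
  · exact (integrable_inner_gauss hb u).const_mul 2
  · exact (integrable_sq_norm_mul_gauss hb).add ((integrable_inner_gauss hb u).const_mul 2)
  · exact (integrable_gauss hb).const_mul _

lemma maxwellian_eq {D : ℕ} {m n Θ : ℝ} (hm : 0 < m) (hΘ : 0 < Θ)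
    (u : EuclideanSpace ℝ (Fin D)) :
    maxwellian D m n Θ u = fun v =>
      (n * (m / (2 * Θ) / π) ^ ((D : ℝ) / 2)) * Real.exp (-(m / (2 * Θ)) * ‖v - u‖ ^ 2) := by
  funext v
  unfold maxwellian
  have h1 : m / (2 * π * Θ) = m / (2 * Θ) / π := by
    rw [div_div]
    congr 1
    ring
  have h2 : -(m * ‖v - u‖ ^ 2) / (2 * Θ) = -(m / (2 * Θ)) * ‖v - u‖ ^ 2 := by
    ring
  rw [h1, h2]

lemma species_balance {D : ℕ} (hD : 1 ≤ D) {m n T ν Θ : ℝ} (hm : 0 < m) (hn : 0 < n)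
    (hΘ : 0 < Θ) (f : EuclideanSpace ℝ (Fin D) → ℝ) (hf_int : Integrable f)
    (hf_mom : Integrable (fun v => f v • v)) (hf_en : Integrable (fun v => ‖v‖ ^ 2 * f v))
    (hn_def : n = ∫ v, f v) (vb u : EuclideanSpace ℝ (Fin D))
    (hvb : n • vb = ∫ v, f v • v)
    (hT_def : (D : ℝ) / 2 * n * T = ∫ v, m / 2 * ‖v - vb‖ ^ 2 * f v) :
    m * (∫ v, ‖v‖ ^ 2 * (ν * (maxwellian D m n Θ u v - f v)))
      = ν * ((D : ℝ) * n * (Θ - T) + m * n * (‖u‖ ^ 2 - ‖vb‖ ^ 2)) := by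
  set b : ℝ := m / (2 * Θ) with hb_def
  have hb : 0 < b := by positivity
  have hπ : (0:ℝ) < π := pi_pos
  have hC : (b / π) ^ ((D : ℝ) / 2) * (π / b) ^ ((D : ℝ) / 2) = 1 := by
    rw [← Real.mul_rpow (by positivity) (by positivity)]
    rw [show b / π * (π / b) = 1 by field_simp]
    exact Real.one_rpow _
  have hMeq := maxwellian_eq (n := n) hm hΘ u
  have hMint : Integrable (maxwellian D m n Θ u) := by
    rw [hMeq]
    exact (integrable_gauss_shift hb u).const_mul _
  have hMen : Integrable (fun v => ‖v‖ ^ 2 * maxwellian D m n Θ u v) := by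
    rw [hMeq]
    have := (integrable_sq_norm_gauss_shift hb u).const_mul
      (n * (b / π) ^ ((D : ℝ) / 2))
    refine this.congr (Filter.Eventually.of_forall fun v => ?_)
    ring
  have hIM2 : ∫ v, ‖v‖ ^ 2 * maxwellian D m n Θ u v
      = n * ‖u‖ ^ 2 + (D : ℝ) * n * Θ / m := by
    rw [hMeq]
    have heq : (fun v : EuclideanSpace ℝ (Fin D) =>
        ‖v‖ ^ 2 * ((n * (b / π) ^ ((D : ℝ) / 2)) * Real.exp (-b * ‖v - u‖ ^ 2)))
        = fun v => (n * (b / π) ^ ((D : ℝ) / 2)) * (‖v‖ ^ 2 * Real.exp (-b * ‖v - u‖ ^ 2)) := by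
      funext v; ring
    rw [heq, integral_const_mul, integral_sq_norm_gauss_shift hD hb u]
    have h2b : (D : ℝ) * (2 * b)⁻¹ = (D : ℝ) * Θ / m := by
      rw [hb_def]
      field_simp
    rw [mul_comm (‖u‖ ^ 2 + (D : ℝ) * (2 * b)⁻¹), ← mul_assoc, mul_assoc n, hC, mul_one, h2b]
    ring
  -- second moments of f
  have h_inner_int : Integrable (fun v : EuclideanSpace ℝ (Fin D) =>
      (inner ℝ vb v : ℝ) * f v) := by
    have h1 := (innerSL ℝ vb).integrable_comp hf_mom
    refine h1.congr (Filter.Eventually.of_forall fun v => ?_)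
    simp [real_inner_smul_right]
    ring
  have h_cent_int : Integrable (fun v : EuclideanSpace ℝ (Fin D) => ‖v - vb‖ ^ 2 * f v) := by
    have heq : (fun v : EuclideanSpace ℝ (Fin D) => ‖v - vb‖ ^ 2 * f v)
        = fun v => (‖v‖ ^ 2 * f v - 2 * ((inner ℝ vb v : ℝ) * f v)) + ‖vb‖ ^ 2 * f v := by
      funext v
      rw [norm_sub_sq_real, real_inner_comm v vb]
      ring
    rw [heq]
    exact ((hf_en.sub (h_inner_int.const_mul 2)).add (hf_int.const_mul _))
  have hIinner : ∫ v, (inner ℝ vb v : ℝ) * f v = n * ‖vb‖ ^ 2 := by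
    have h1 := integral_inner (𝕜 := ℝ) hf_mom vb
    have h2 : (fun v : EuclideanSpace ℝ (Fin D) => (inner ℝ vb (f v • v) : ℝ))
        = fun v => (inner ℝ vb v : ℝ) * f v := by
      funext v
      rw [real_inner_smul_right]
      ring
    rw [h2] at h1
    rw [h1, ← hvb, real_inner_smul_right, real_inner_self_eq_norm_sq]
  have hIcent : ∫ v, ‖v - vb‖ ^ 2 * f v = (D : ℝ) * n * T / m := by
    have heq : (fun v : EuclideanSpace ℝ (Fin D) => m / 2 * ‖v - vb‖ ^ 2 * f v)
        = fun v => m / 2 * (‖v - vb‖ ^ 2 * f v) := by funext v; ring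
    rw [heq, integral_const_mul] at hT_def
    have hm' : m ≠ 0 := hm.ne'
    field_simp at hT_def ⊢
    linarith
  have hIf2 : ∫ v, ‖v‖ ^ 2 * f v = (D : ℝ) * n * T / m + n * ‖vb‖ ^ 2 := by
    have heq : (fun v : EuclideanSpace ℝ (Fin D) => ‖v‖ ^ 2 * f v)
        = fun v => (‖v - vb‖ ^ 2 * f v + 2 * ((inner ℝ vb v : ℝ) * f v)) - ‖vb‖ ^ 2 * f v := by
      funext v
      rw [norm_sub_sq_real, real_inner_comm v vb]
      ring
    have hsum : Integrable (fun v : EuclideanSpace ℝ (Fin D) =>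
        ‖v - vb‖ ^ 2 * f v + 2 * ((inner ℝ vb v : ℝ) * f v)) := by
      exact h_cent_int.add (h_inner_int.const_mul 2)
    have hc : Integrable (fun v : EuclideanSpace ℝ (Fin D) => ‖vb‖ ^ 2 * f v) := by
      exact hf_int.const_mul _
    rw [heq, integral_sub hsum hc,
      integral_add h_cent_int (h_inner_int.const_mul 2), integral_const_mul, integral_const_mul,
      hIinner, hIcent, ← hn_def]
    ring
  -- assemble
  have hsplit : (fun v : EuclideanSpace ℝ (Fin D) =>
      ‖v‖ ^ 2 * (ν * (maxwellian D m n Θ u v - f v)))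
      = fun v => ν * (‖v‖ ^ 2 * maxwellian D m n Θ u v) - ν * (‖v‖ ^ 2 * f v) := by
    funext v; ring
  rw [hsplit, integral_sub (hMen.const_mul ν) (hf_en.const_mul ν), integral_const_mul,
    integral_const_mul, hIM2, hIf2]
  field_simp
  ring

end BGKAux

/-- The interspecies kinetic-energy exchange of the multispecies BGK operator
balances if and only if the common mixture temperature `Θ` equals
`(n_p ν_{p,q} T_p + n_q ν_{q,p} T_q)/(n_p ν_{p,q} + n_q ν_{q,p})
 + (ρ_p ν_{p,q}(|v̄_p|² − |u|²) + ρ_q ν_{q,p}(|v̄_q|² − |u|²))/(D(n_p ν_{p,q} + n_q ν_{q,p}))`. -/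
theorem bgk_mixture_temperature
    (D : ℕ) (hD : 1 ≤ D) (mp mq : ℝ) (hmp : 0 < mp) (hmq : 0 < mq)
    (fp fq : EuclideanSpace ℝ (Fin D) → ℝ)
    (hfp_nonneg : ∀ v, 0 ≤ fp v) (hfq_nonneg : ∀ v, 0 ≤ fq v)
    (hfp_int : Integrable fp) (hfq_int : Integrable fq)
    (hfp_mom : Integrable (fun v => fp v • v))
    (hfq_mom : Integrable (fun v => fq v • v))
    (hfp_en : Integrable (fun v => ‖v‖ ^ 2 * fp v))
    (hfq_en : Integrable (fun v => ‖v‖ ^ 2 * fq v))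
    (np nq : ℝ) (hnp_def : np = ∫ v, fp v) (hnq_def : nq = ∫ v, fq v)
    (hnp : 0 < np) (hnq : 0 < nq)
    (vbp vbq : EuclideanSpace ℝ (Fin D))
    (hvbp : np • vbp = ∫ v, fp v • v) (hvbq : nq • vbq = ∫ v, fq v • v)
    (Tp Tq : ℝ)
    (hTp_def : (D : ℝ) / 2 * np * Tp = ∫ v, mp / 2 * ‖v - vbp‖ ^ 2 * fp v)
    (hTq_def : (D : ℝ) / 2 * nq * Tq = ∫ v, mq / 2 * ‖v - vbq‖ ^ 2 * fq v)
    (ρp ρq : ℝ) (hρp : ρp = mp * np) (hρq : ρq = mq * nq)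
    (νpq νqp : ℝ) (hνpq : 0 < νpq) (hνqp : 0 < νqp)
    (u : EuclideanSpace ℝ (Fin D))
    (hu : u = (ρp * νpq + ρq * νqp)⁻¹ • ((ρp * νpq) • vbp + (ρq * νqp) • vbq))
    (Θ : ℝ) (hΘ : 0 < Θ) :
    mp * (∫ v, ‖v‖ ^ 2 * (νpq * (maxwellian D mp np Θ u v - fp v)))
      + mq * (∫ v, ‖v‖ ^ 2 * (νqp * (maxwellian D mq nq Θ u v - fq v))) = 0 ↔
    Θ = (np * νpq * Tp + nq * νqp * Tq) / (np * νpq + nq * νqp)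
      + (ρp * νpq * (‖vbp‖ ^ 2 - ‖u‖ ^ 2) + ρq * νqp * (‖vbq‖ ^ 2 - ‖u‖ ^ 2))
        / ((D : ℝ) * (np * νpq + nq * νqp)) := by
  rw [species_balance hD hmp hnp hΘ fp hfp_int hfp_mom hfp_en hnp_def vbp u hvbp hTp_def,
    species_balance hD hmq hnq hΘ fq hfq_int hfq_mom hfq_en hnq_def vbq u hvbq hTq_def,
    hρp, hρq]
  have hDpos : (0:ℝ) < (D : ℝ) := by exact_mod_cast hD.trans_lt' Nat.zero_lt_one
  have hS : (0:ℝ) < np * νpq + nq * νqp := by positivity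
  have hDS : (D : ℝ) * (np * νpq + nq * νqp) ≠ 0 := by positivity
  set R : ℝ := (np * νpq * Tp + nq * νqp * Tq) / (np * νpq + nq * νqp)
      + (mp * np * νpq * (‖vbp‖ ^ 2 - ‖u‖ ^ 2) + mq * nq * νqp * (‖vbq‖ ^ 2 - ‖u‖ ^ 2))
        / ((D : ℝ) * (np * νpq + nq * νqp)) with hR_def
  have hR : R * ((D : ℝ) * (np * νpq + nq * νqp))
      = (D : ℝ) * (np * νpq * Tp + nq * νqp * Tq)
        + (mp * np * νpq * (‖vbp‖ ^ 2 - ‖u‖ ^ 2) + mq * nq * νqp * (‖vbq‖ ^ 2 - ‖u‖ ^ 2)) := by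
    rw [hR_def]
    field_simp
  constructor
  · intro h
    have h2 : Θ * ((D : ℝ) * (np * νpq + nq * νqp))
        = (D : ℝ) * (np * νpq * Tp + nq * νqp * Tq)
          + (mp * np * νpq * (‖vbp‖ ^ 2 - ‖u‖ ^ 2) + mq * nq * νqp * (‖vbq‖ ^ 2 - ‖u‖ ^ 2)) := by
      linear_combination h
    exact mul_right_cancel₀ hDS (by rw [h2, hR])
  · intro h
    have h2 : Θ * ((D : ℝ) * (np * νpq + nq * νqp))
        = (D : ℝ) * (np * νpq * Tp + nq * νqp * Tq)
          + (mp * np * νpq * (‖vbp‖ ^ 2 - ‖u‖ ^ 2) + mq * nq * νqp * (‖vbq‖ ^ 2 - ‖u‖ ^ 2)) := by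
      rw [h, hR]
    linear_combination h2
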